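/- Let V be a finite-dimensional vector space over a field F, let A : V → V be diagonalizable with eigenspaces V_0, ..., V_d (d ≥ 2) listed so that A*V_i ⊆ V_{i-1} + V_i + V_{i+1} for a linear map A* : V → V, and suppose additionally that no proper nonzero subspace of V is invariant under both A and A*. If {V_{σ(i)}}_{i=0}^d is another standard ordering of the eigenspaces (i.e., A*V_{σ(i)} ⊆ V_{σ(i-1)} + V_{σ(i)} + V_{σ(i+1)} for a permutation σ of {0,...,d}), then σ is either the identity or the reversal i ↦ d - i. -/

import Mathlib

/-- Extend a finite sequence of subspaces, indexed by `Fin (d+1)`, to a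
`ℤ`-indexed sequence that is `⊥` outside the range `0,…,d`.  This encodes
the boundary convention `V₋₁ = 0`, `V_{d+1} = 0`. -/
def extOrd {F V : Type*} [Field F] [AddCommGroup V] [Module F V] {d : ℕ}
    (E : Fin (d + 1) → Submodule F V) : ℤ → Submodule F V :=
  fun i => if h : 0 ≤ i ∧ i < (d : ℤ) + 1 then E ⟨i.toNat, by omega⟩ else ⊥

private lemma extOrd_coe {F V : Type*} [Field F] [AddCommGroup V] [Module F V] {d : ℕ}
    (E : Fin (d + 1) → Submodule F V) (i : Fin (d + 1)) :
    extOrd E ((i : ℕ) : ℤ) = E i := by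
  have h : (0:ℤ) ≤ ((i:ℕ):ℤ) ∧ ((i:ℕ):ℤ) < (d:ℤ) + 1 :=
    ⟨Int.natCast_nonneg _, by exact_mod_cast i.isLt⟩
  rw [extOrd, dif_pos h]
  exact congrArg E (Fin.ext (by simp))

section Proj
variable {F V : Type*} [Field F] [AddCommGroup V] [Module F V] {d : ℕ}
  (E : Fin (d + 1) → Submodule F V)

private noncomputable def projOf (hc : ∀ j, IsCompl (E j) (⨆ l, ⨆ _ : l ≠ j, E l))
    (j : Fin (d + 1)) : V →ₗ[F] V :=
  (E j).subtype ∘ₗ (E j).linearProjOfIsCompl _ (hc j)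

private lemma projOf_self (hc : ∀ j, IsCompl (E j) (⨆ l, ⨆ _ : l ≠ j, E l)) (j : Fin (d + 1))
    {v : V} (hv : v ∈ E j) : projOf E hc j v = v := by
  have := Submodule.linearProjOfIsCompl_apply_left (hc j) ⟨v, hv⟩
  exact congrArg Subtype.val this

private lemma projOf_zero (hc : ∀ j, IsCompl (E j) (⨆ l, ⨆ _ : l ≠ j, E l)) (j : Fin (d + 1))
    {v : V} (hv : v ∈ ⨆ l, ⨆ _ : l ≠ j, E l) : projOf E hc j v = 0 := by
  have := Submodule.linearProjOfIsCompl_apply_right' (hc j) hv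
  exact congrArg Subtype.val this

/-- If (when `m` is in range) the `m`-th member of the reordered family is not `E j`,
then the `m`-th member is killed by the projection onto `E j`. -/
private lemma projOf_ext (hc : ∀ j, IsCompl (E j) (⨆ l, ⨆ _ : l ≠ j, E l)) (j : Fin (d + 1))
    (G : Fin (d + 1) → Fin (d + 1)) (m : ℤ)
    (hm : ∀ h : 0 ≤ m ∧ m < (d : ℤ) + 1, G ⟨m.toNat, by omega⟩ ≠ j) :
    extOrd (fun l => E (G l)) m ≤ LinearMap.ker (projOf E hc j) := by
  rw [extOrd]
  split_ifs with h
  · intro v hv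
    refine LinearMap.mem_ker.mpr (projOf_zero E hc j ?_)
    exact le_iSup₂ (f := fun l (_ : l ≠ j) => E l) (G ⟨m.toNat, by omega⟩) (hm h) hv
  · exact bot_le

end Proj

private lemma perm_id_or_rev {d : ℕ} (hd : 0 < d) (τ : Equiv.Perm (Fin (d + 1)))
    (h : ∀ k : ℕ, ∀ _ : k < d,
      ((τ ⟨k + 1, by omega⟩ : Fin (d + 1)) : ℕ) = (τ ⟨k, by omega⟩ : ℕ) + 1 ∨
      ((τ ⟨k, by omega⟩ : Fin (d + 1)) : ℕ) = (τ ⟨k + 1, by omega⟩ : ℕ) + 1) :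
    τ = Equiv.refl (Fin (d + 1)) ∨ τ = Fin.revPerm := by
  set f : ℕ → ℕ := fun k => if hk : k < d + 1 then (τ ⟨k, hk⟩ : ℕ) else 0 with hfdef
  have hf : ∀ k (hk : k < d + 1), f k = (τ ⟨k, hk⟩ : ℕ) := fun k hk => dif_pos hk
  have h' : ∀ k : ℕ, k < d → f (k + 1) = f k + 1 ∨ f k = f (k + 1) + 1 := by
    intro k hk
    rw [hf k (by omega), hf (k + 1) (by omega)]
    exact (h k hk).symm.imp (fun a => a) (fun a => a) |>.symm
  have hinj : ∀ k l : ℕ, k < d + 1 → l < d + 1 → f k = f l → k = l := by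
    intro k l hk hl hfe
    rw [hf k hk, hf l hl] at hfe
    have := τ.injective (Fin.ext hfe)
    exact congrArg Fin.val this
  have hbnd : ∀ k : ℕ, k < d + 1 → f k < d + 1 := by
    intro k hk; rw [hf k hk]; exact (τ ⟨k, hk⟩).isLt
  rcases h' 0 hd with h0 | h0
  · have hstep : ∀ k : ℕ, k < d → f (k + 1) = f k + 1 := by
      intro k
      induction k with
      | zero => intro _; exact h0
      | succ n ih =>
        intro hk
        rcases h' (n + 1) hk with h1 | h1
        · exact h1
        · exfalso
          have h2 := ih (by omega)
          have hfe : f (n + 1 + 1) = f n := by omega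
          have := hinj (n + 1 + 1) n (by omega) (by omega) hfe
          omega
    have hval : ∀ k : ℕ, k < d + 1 → f k = f 0 + k := by
      intro k
      induction k with
      | zero => intro _; rfl
      | succ n ih =>
        intro hk
        have := hstep n (by omega)
        have := ih (by omega)
        omega
    have hd0 : f 0 = 0 := by
      have h1 := hval d (by omega)
      have h2 := hbnd d (by omega)
      omega
    left
    ext i
    show (τ i : ℕ) = (i : ℕ)
    have h1 := hval i.val i.isLt
    rw [hf i.val i.isLt] at h1
    have h2 : (⟨i.val, i.isLt⟩ : Fin (d + 1)) = i := Fin.ext rfl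
    rw [h2] at h1
    omega
  · have hstep : ∀ k : ℕ, k < d → f k = f (k + 1) + 1 := by
      intro k
      induction k with
      | zero => intro _; exact h0
      | succ n ih =>
        intro hk
        rcases h' (n + 1) hk with h1 | h1
        · exfalso
          have h2 := ih (by omega)
          have hfe : f (n + 1 + 1) = f n := by omega
          have := hinj (n + 1 + 1) n (by omega) (by omega) hfe
          omega
        · exact h1
    have hval : ∀ k : ℕ, k < d + 1 → f k + k = f 0 := by
      intro k
      induction k with
      | zero => intro _; rfl
      | succ n ih =>
        intro hk
        have := hstep n (by omega)
        have := ih (by omega)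
        omega
    have hd0 : f 0 = d := by
      have h1 := hval d (by omega)
      have h2 := hbnd 0 (by omega)
      have h3 := hbnd d (by omega)
      omega
    right
    ext i
    show (τ i : ℕ) = (Fin.rev i : ℕ)
    rw [Fin.val_rev]
    have h1 := hval i.val i.isLt
    rw [hf i.val i.isLt] at h1
    have h2 : (⟨i.val, i.isLt⟩ : Fin (d + 1)) = i := Fin.ext rfl
    rw [h2] at h1
    have h4 := i.isLt
    omega

set_option maxHeartbeats 1000000 in
theorem stmt_7 {F V : Type*} [Field F] [AddCommGroup V] [Module F V]
    [FiniteDimensional F V]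
    (A Astar : Module.End F V) (d : ℕ) (hd : 2 ≤ d)
    (θ : Fin (d + 1) → F) (hθ : Function.Injective θ)
    (E : Fin (d + 1) → Submodule F V)
    (heig : ∀ i, E i = Module.End.eigenspace A (θ i))
    (hnz : ∀ i, E i ≠ ⊥)
    (hdiag : (⨆ i, E i) = ⊤)
    (hstd : ∀ i : ℤ, ∀ v ∈ extOrd E i,
      Astar v ∈ extOrd E (i - 1) ⊔ extOrd E i ⊔ extOrd E (i + 1))
    (hirr : ∀ W : Submodule F V, (∀ v ∈ W, A v ∈ W) → (∀ v ∈ W, Astar v ∈ W) →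
      W = ⊥ ∨ W = ⊤)
    (σ : Equiv.Perm (Fin (d + 1)))
    (hstdσ : ∀ i : ℤ, ∀ v ∈ extOrd (fun j => E (σ j)) i,
      Astar v ∈ extOrd (fun j => E (σ j)) (i - 1) ⊔ extOrd (fun j => E (σ j)) i ⊔
        extOrd (fun j => E (σ j)) (i + 1)) :
    σ = Equiv.refl (Fin (d + 1)) ∨ σ = Fin.revPerm := by
  -- independence of the eigenspaces
  have hind : iSupIndep E := by
    have h1 := (Module.End.eigenspaces_iSupIndep A).comp hθ
    have h2 : E = fun i => Module.End.eigenspace A (θ i) := funext heig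
    rw [h2]; exact h1
  have hcompl : ∀ j, IsCompl (E j) (⨆ l, ⨆ _ : l ≠ j, E l) := by
    intro j
    refine ⟨hind j, codisjoint_iff.mpr (le_antisymm le_top ?_)⟩
    rw [← hdiag]
    refine iSup_le fun l => ?_
    by_cases hl : l = j
    · subst hl; exact le_sup_left
    · exact le_trans (le_iSup₂ (f := fun l (_ : l ≠ j) => E l) l hl) le_sup_right
  -- Step A: for every k < d there is an "edge" from E k to E (k+1)
  have hedge : ∀ k : ℕ, ∀ hk : k < d,
      ∃ v ∈ E ⟨k, by omega⟩, projOf E hcompl ⟨k + 1, by omega⟩ (Astar v) ≠ 0 := by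
    intro k hk
    by_contra hcon
    push_neg at hcon
    set W : Submodule F V := ⨆ l : Fin (d + 1), ⨆ _ : (l : ℕ) ≤ k, E l with hW
    have hEW : ∀ l : Fin (d + 1), (l : ℕ) ≤ k → E l ≤ W :=
      fun l hl => le_iSup₂ (f := fun (l : Fin (d+1)) (_ : (l : ℕ) ≤ k) => E l) l hl
    have hextW : ∀ m : ℤ, m ≤ (k : ℤ) → extOrd E m ≤ W := by
      intro m hm
      rw [extOrd]
      split_ifs with h
      · exact hEW ⟨m.toNat, by omega⟩ (by simp; omega)
      · exact bot_le
    have hAW : ∀ v ∈ W, A v ∈ W := by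
      intro v hv
      have hmap : Submodule.map A W ≤ W := by
        rw [hW]
        simp only [Submodule.map_iSup]
        refine iSup₂_le fun l hl => le_trans ?_ (hEW l hl)
        rintro x ⟨y, hy, rfl⟩
        have hy' : A y = θ l • y := Module.End.mem_eigenspace_iff.mp (heig l ▸ hy)
        rw [hy']
        exact Submodule.smul_mem _ _ hy
      exact hmap ⟨v, hv, rfl⟩
    have hAsW : ∀ v ∈ W, Astar v ∈ W := by
      intro v hv
      have hmap : Submodule.map Astar W ≤ W := by
        rw [hW]
        simp only [Submodule.map_iSup]
        refine iSup₂_le fun l hl => ?_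
        rintro x ⟨y, hy, rfl⟩
        have hy' : y ∈ extOrd E ((l : ℕ) : ℤ) := by rw [extOrd_coe]; exact hy
        have h3 := hstd _ y hy'
        by_cases hcase : (l : ℕ) < k
        · exact (sup_le (sup_le (hextW _ (by omega)) (hextW _ (by omega)))
            (hextW _ (by omega))) h3
        · have hlk : (l : ℕ) = k := by omega
          rcases Submodule.mem_sup.mp h3 with ⟨w, hw, u, hu, huw⟩
          have hrange : (0:ℤ) ≤ (l:ℕ) + 1 ∧ ((l:ℕ):ℤ) + 1 < (d:ℤ) + 1 := by
            constructor <;> omega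
          have hEq : extOrd E (((l:ℕ):ℤ) + 1) = E ⟨k + 1, by omega⟩ := by
            rw [extOrd, dif_pos hrange]
            exact congrArg E (Fin.ext (by simp; omega))
          have hu' : u ∈ E ⟨k + 1, by omega⟩ := hEq ▸ hu
          have hπw : projOf E hcompl ⟨k + 1, by omega⟩ w = 0 := by
            have k1 : extOrd E (((l:ℕ):ℤ) - 1) ≤
                LinearMap.ker (projOf E hcompl ⟨k + 1, by omega⟩) := by
              refine projOf_ext E hcompl _ id _ ?_
              intro hh heq
              have := congrArg Fin.val heq
              simp at this
              omega
            have k2 : extOrd E ((l:ℕ) : ℤ) ≤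
                LinearMap.ker (projOf E hcompl ⟨k + 1, by omega⟩) := by
              refine projOf_ext E hcompl _ id _ ?_
              intro hh heq
              have := congrArg Fin.val heq
              simp at this
              omega
            exact LinearMap.mem_ker.mp ((sup_le k1 k2) hw)
          have hπu : projOf E hcompl ⟨k + 1, by omega⟩ u = u := projOf_self E hcompl _ hu'
          have hyk : y ∈ E ⟨k, by omega⟩ := by
            have : l = (⟨k, by omega⟩ : Fin (d + 1)) := Fin.ext hlk
            rwa [this] at hy
          have hπy := hcon y hyk
          rw [← huw, map_add, hπw, hπu, zero_add] at hπy
          rw [← huw, hπy, add_zero]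
          exact (sup_le (hextW _ (by omega)) (hextW _ (by omega))) hw
      exact hmap ⟨v, hv, rfl⟩
    rcases hirr W hAW hAsW with hbot | htop
    · have h0 : E ⟨0, by omega⟩ ≤ W := hEW _ (by simp)
      rw [hbot] at h0
      exact hnz _ (le_bot_iff.mp h0)
    · have hWle : W ≤ ⨆ l, ⨆ _ : l ≠ (⟨k + 1, by omega⟩ : Fin (d + 1)), E l := by
        refine iSup₂_le fun l hl => ?_
        refine le_iSup₂ (f := fun l (_ : l ≠ _) => E l) l ?_
        intro hcontra
        have := congrArg Fin.val hcontra
        simp at this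
        omega
      have hle : E ⟨k + 1, by omega⟩ ≤
          ⨆ l, ⨆ _ : l ≠ (⟨k + 1, by omega⟩ : Fin (d + 1)), E l :=
        le_trans (htop ▸ le_top : E ⟨k + 1, by omega⟩ ≤ W) hWle
      exact hnz _ (le_bot_iff.mp ((hind _) le_rfl hle))
  -- Step B: edges force σ⁻¹-adjacency
  have hB : ∀ i j : Fin (d + 1),
      (∃ v ∈ E i, projOf E hcompl j (Astar v) ≠ 0) →
      ((σ.symm j : ℕ) : ℤ) = ((σ.symm i : ℕ) : ℤ) - 1 ∨
      ((σ.symm j : ℕ) : ℤ) = ((σ.symm i : ℕ) : ℤ) ∨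
      ((σ.symm j : ℕ) : ℤ) = ((σ.symm i : ℕ) : ℤ) + 1 := by
    intro i j ⟨v, hv, hne⟩
    set a := σ.symm i with ha
    have hva : v ∈ extOrd (fun l => E (σ l)) ((a : ℕ) : ℤ) := by
      rw [extOrd_coe (fun l => E (σ l)) a]
      simpa [ha] using hv
    have h3 := hstdσ ((a : ℕ) : ℤ) v hva
    by_contra hcon
    push_neg at hcon
    obtain ⟨hc1, hc2, hc3⟩ := hcon
    have k1 : extOrd (fun l => E (σ l)) (((a:ℕ):ℤ) - 1) ≤
        LinearMap.ker (projOf E hcompl j) := by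
      refine projOf_ext E hcompl j σ _ ?_
      intro hh heq
      apply hc1
      have : σ.symm j = ⟨(((a:ℕ):ℤ) - 1).toNat, by omega⟩ := by
        rw [← heq, Equiv.symm_apply_apply]
      rw [this]
      simp
      omega
    have k2 : extOrd (fun l => E (σ l)) ((a:ℕ):ℤ) ≤
        LinearMap.ker (projOf E hcompl j) := by
      refine projOf_ext E hcompl j σ _ ?_
      intro hh heq
      apply hc2
      have : σ.symm j = ⟨(((a:ℕ):ℤ)).toNat, by omega⟩ := by
        rw [← heq, Equiv.symm_apply_apply]
      rw [this]
      simp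
    have k3 : extOrd (fun l => E (σ l)) (((a:ℕ):ℤ) + 1) ≤
        LinearMap.ker (projOf E hcompl j) := by
      refine projOf_ext E hcompl j σ _ ?_
      intro hh heq
      apply hc3
      have : σ.symm j = ⟨(((a:ℕ):ℤ) + 1).toNat, by omega⟩ := by
        rw [← heq, Equiv.symm_apply_apply]
      rw [this]
      simp
    exact hne (LinearMap.mem_ker.mp ((sup_le (sup_le k1 k2) k3) h3))
  -- combine
  have hsteps : ∀ k : ℕ, ∀ _ : k < d,
      ((σ.symm ⟨k + 1, by omega⟩ : Fin (d + 1)) : ℕ) = (σ.symm ⟨k, by omega⟩ : ℕ) + 1 ∨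
      ((σ.symm ⟨k, by omega⟩ : Fin (d + 1)) : ℕ) = (σ.symm ⟨k + 1, by omega⟩ : ℕ) + 1 := by
    intro k hk
    have hB' := hB ⟨k, by omega⟩ ⟨k + 1, by omega⟩ (hedge k hk)
    have hne : σ.symm (⟨k, by omega⟩ : Fin (d + 1)) ≠ σ.symm ⟨k + 1, by omega⟩ := by
      intro hcontra
      have := congrArg Fin.val (σ.symm.injective hcontra)
      simp at this
    have hne' : ((σ.symm (⟨k, by omega⟩ : Fin (d + 1)) : ℕ) : ℤ) ≠
        ((σ.symm (⟨k + 1, by omega⟩ : Fin (d + 1)) : ℕ) : ℤ) := by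
      intro hcontra
      exact hne (Fin.ext (by exact_mod_cast hcontra))
    omega
  rcases perm_id_or_rev (by omega) σ.symm hsteps with hcase | hcase
  · left
    calc σ = σ.symm.symm := (Equiv.symm_symm σ).symm
    _ = (Equiv.refl (Fin (d + 1))).symm := by rw [hcase]
    _ = Equiv.refl (Fin (d + 1)) := rfl
  · right
    calc σ = σ.symm.symm := (Equiv.symm_symm σ).symm
    _ = Fin.revPerm.symm := by rw [hcase]
    _ = Fin.revPerm := Fin.revPerm_symm
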